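/- Let (Γ, m, E, s) be a groupoid in the sense of Zakrzewski. Then (A(Γ), convolution, *, ‖·‖) is a normed *-algebra: for all f, f₁, f₂, f₃ ∈ A(Γ), the convolution f₁f₂ is a well-defined finitely supported function; (f₁f₂)f₃ = f₁(f₂f₃); (f₁f₂)* = f₂*f₁*; ‖f‖ is finite with ‖f‖ = 0 implying f = 0; ‖f₁ + f₂‖ ≤ ‖f₁‖ + ‖f₂‖; ‖f₁f₂‖ ≤ ‖f₁‖·‖f₂‖; and ‖f*‖ = ‖f‖. -/

import Mathlib

/-- A groupoid in the sense of Zakrzewski: `m z x y` means `(z; x, y) ∈ m`,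
`E` is the set of identities and `s` is the inverse map. -/
def IsZGroupoid {Γ : Type*} (m : Γ → Γ → Γ → Prop) (E : Set Γ) (s : Γ → Γ) : Prop :=
  (∀ x, s (s x) = x) ∧
  (∀ x y w z, (∃ u, m u x y ∧ m z u w) ↔ (∃ v, m v y w ∧ m z x v)) ∧
  (∀ z x, (∃ a ∈ E, m z a x) ↔ z = x) ∧
  (∀ z x, (∃ a ∈ E, m z x a) ↔ z = x) ∧
  (∀ z x y, m (s z) x y ↔ m z (s y) (s x)) ∧
  (∀ x, ∃ z, m z (s x) x) ∧
  (∀ x z, m z (s x) x → z ∈ E)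

/-- The convolution on finitely supported functions:
`(f₁ f₂)(x) = Σ_{y ∈ F_l(e_L(x))} f₁(y) f₂(s(y)·x)`, where `mul` is the groupoid
product on composable pairs. -/
noncomputable def zconv {Γ : Type*} (eL : Γ → Γ) (s : Γ → Γ) (mul : Γ → Γ → Γ)
    (f₁ f₂ : Γ → ℂ) : Γ → ℂ :=
  fun x => ∑ᶠ y ∈ {y | eL y = eL x}, f₁ y * f₂ (mul (s y) x)

/-- The star operation `f*(x) = conj (f (s x))`. -/
def zstar {Γ : Type*} (s : Γ → Γ) (f : Γ → ℂ) : Γ → ℂ :=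
  fun x => star (f (s x))

/-- The fiber norm `a ↦ Σ_{x : e(x) = a} |f(x)|`. -/
noncomputable def zfibNorm {Γ : Type*} (e : Γ → Γ) (f : Γ → ℂ) (a : Γ) : ℝ :=
  ∑ᶠ x ∈ {x | e x = a}, ‖f x‖

/-- `‖f‖ := max (‖f‖_l, ‖f‖_r)` where `‖f‖_l = sup_{a ∈ E} Σ_{x ∈ F_l(a)} |f(x)|`
and `‖f‖_r = sup_{a ∈ E} Σ_{x ∈ F_r(a)} |f(x)|`. -/
noncomputable def znorm {Γ : Type*} (E : Set Γ) (eL eR : Γ → Γ) (f : Γ → ℂ) : ℝ :=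
  max (sSup (zfibNorm eL f '' E)) (sSup (zfibNorm eR f '' E))

open Function Set

section FinsumHelpers
variable {α β : Type*}

theorem ZH.fmem_ne_zero {M : Type*} [AddCommMonoid M] {S : Set α} {F : α → M}
    (h : ∑ᶠ b ∈ S, F b ≠ 0) : ∃ b ∈ S, F b ≠ 0 := by
  by_contra hc
  push_neg at hc
  exact h (finsum_mem_eq_zero_of_forall_eq_zero hc)

theorem ZH.fmem_le {S : Set α} {g G : α → ℝ} (hg : (S ∩ Function.support g).Finite)
    (hG : (S ∩ Function.support G).Finite) (hle : ∀ x ∈ S, g x ≤ G x) :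
    ∑ᶠ x ∈ S, g x ≤ ∑ᶠ x ∈ S, G x := by
  classical
  have hu := hg.union hG
  have hsub : ↑hu.toFinset ⊆ S := by
    intro x hx
    rw [Set.Finite.coe_toFinset] at hx
    rcases hx with hx | hx <;> exact hx.1
  rw [finsum_mem_eq_sum_of_subset g (by intro x hx; rw [Set.Finite.coe_toFinset]; exact Or.inl hx) hsub,
      finsum_mem_eq_sum_of_subset G (by intro x hx; rw [Set.Finite.coe_toFinset]; exact Or.inr hx) hsub]
  exact Finset.sum_le_sum fun x hx => hle x (hsub hx)

theorem ZH.fmem_mul_r {R : Type*} [NonUnitalNonAssocSemiring R] {S : Set α} (g : α → R) (c : R)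
    (h : (S ∩ Function.support g).Finite) :
    (∑ᶠ x ∈ S, g x) * c = ∑ᶠ x ∈ S, g x * c := by
  classical
  have h2 : ∑ᶠ x ∈ S, g x * c = ∑ x ∈ h.toFinset, g x * c := by
    apply finsum_mem_eq_sum_of_subset
    · intro x hx
      rw [Set.Finite.coe_toFinset]
      exact ⟨hx.1, left_ne_zero_of_mul hx.2⟩
    · intro x hx
      rw [Set.Finite.coe_toFinset] at hx
      exact hx.1
  rw [finsum_mem_eq_sum g h, h2, Finset.sum_mul]

theorem ZH.fmem_mul_l {R : Type*} [NonUnitalNonAssocSemiring R] {S : Set α} (g : α → R) (c : R)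
    (h : (S ∩ Function.support g).Finite) :
    c * (∑ᶠ x ∈ S, g x) = ∑ᶠ x ∈ S, c * g x := by
  classical
  have h2 : ∑ᶠ x ∈ S, c * g x = ∑ x ∈ h.toFinset, c * g x := by
    apply finsum_mem_eq_sum_of_subset
    · intro x hx
      rw [Set.Finite.coe_toFinset]
      exact ⟨hx.1, right_ne_zero_of_mul hx.2⟩
    · intro x hx
      rw [Set.Finite.coe_toFinset] at hx
      exact hx.1
  rw [finsum_mem_eq_sum g h, h2, Finset.mul_sum]

theorem ZH.fmem_swap {M : Type*} [AddCommMonoid M] {S : Set α} {T : Set β} (F : α → β → M)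
    (hfin : {p : α × β | p.1 ∈ S ∧ p.2 ∈ T ∧ F p.1 p.2 ≠ 0}.Finite) :
    ∑ᶠ a ∈ S, ∑ᶠ b ∈ T, F a b = ∑ᶠ b ∈ T, ∑ᶠ a ∈ S, F a b := by
  classical
  set P := hfin.toFinset with hP
  have hmemP : ∀ {a b}, a ∈ S → b ∈ T → F a b ≠ 0 → (a, b) ∈ P := by
    intro a b ha hb hF
    rw [hP, Set.Finite.mem_toFinset]
    exact ⟨ha, hb, hF⟩
  set A := (P.image Prod.fst).filter (· ∈ S) with hA
  set B := (P.image Prod.snd).filter (· ∈ T) with hB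
  have hAS : ↑A ⊆ S := by intro a ha; exact (Finset.mem_filter.1 ha).2
  have hBT : ↑B ⊆ T := by intro b hb; exact (Finset.mem_filter.1 hb).2
  have inner1 : ∀ a ∈ S, (∑ᶠ b ∈ T, F a b) = ∑ b ∈ B, F a b := by
    intro a ha
    apply finsum_mem_eq_sum_of_subset
    · intro b hb
      refine Finset.mem_filter.2 ⟨Finset.mem_image.2 ⟨(a, b), hmemP ha hb.1 hb.2, rfl⟩, hb.1⟩
    · exact hBT
  have inner2 : ∀ b ∈ T, (∑ᶠ a ∈ S, F a b) = ∑ a ∈ A, F a b := by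
    intro b hb
    apply finsum_mem_eq_sum_of_subset
    · intro a ha
      refine Finset.mem_filter.2 ⟨Finset.mem_image.2 ⟨(a, b), hmemP ha.1 hb ha.2, rfl⟩, ha.1⟩
    · exact hAS
  have outer1 : (∑ᶠ a ∈ S, ∑ᶠ b ∈ T, F a b) = ∑ a ∈ A, ∑ᶠ b ∈ T, F a b := by
    apply finsum_mem_eq_sum_of_subset
    · intro a ha
      obtain ⟨b, hb, hFb⟩ := ZH.fmem_ne_zero ha.2
      refine Finset.mem_filter.2 ⟨Finset.mem_image.2 ⟨(a, b), hmemP ha.1 hb hFb, rfl⟩, ha.1⟩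
    · exact hAS
  have outer2 : (∑ᶠ b ∈ T, ∑ᶠ a ∈ S, F a b) = ∑ b ∈ B, ∑ᶠ a ∈ S, F a b := by
    apply finsum_mem_eq_sum_of_subset
    · intro b hb
      obtain ⟨a, ha, hFa⟩ := ZH.fmem_ne_zero hb.2
      refine Finset.mem_filter.2 ⟨Finset.mem_image.2 ⟨(a, b), hmemP ha hb.1 hFa, rfl⟩, hb.1⟩
    · exact hBT
  rw [outer1, outer2,
      Finset.sum_congr rfl (fun a ha => inner1 a (hAS ha)),
      Finset.sum_congr rfl (fun b hb => inner2 b (hBT hb))]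
  exact Finset.sum_comm

theorem ZH.fmem_nonneg {S : Set α} {g : α → ℝ} (h : ∀ x, 0 ≤ g x) :
    0 ≤ ∑ᶠ x ∈ S, g x := by
  rw [finsum_mem_def]
  exact finsum_nonneg fun x => Set.indicator_apply_nonneg fun _ => h x

theorem ZH.single_le_fmem {S : Set α} {g : α → ℝ} (h : (S ∩ Function.support g).Finite)
    (hg : ∀ x, 0 ≤ g x) {i : α} (hi : i ∈ S) : g i ≤ ∑ᶠ x ∈ S, g x := by
  classical
  rcases eq_or_ne (g i) 0 with h0 | h0
  · rw [h0]; exact ZH.fmem_nonneg hg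
  · rw [finsum_mem_eq_sum g h]
    exact Finset.single_le_sum (fun x _ => hg x) (h.mem_toFinset.2 ⟨hi, h0⟩)

theorem ZH.abs_fmem_le {S : Set α} (g : α → ℂ) (h : (S ∩ Function.support g).Finite) :
    ‖∑ᶠ x ∈ S, g x‖ ≤ ∑ᶠ x ∈ S, ‖g x‖ := by
  classical
  have h2 : ∑ᶠ x ∈ S, ‖g x‖ = ∑ x ∈ h.toFinset, ‖g x‖ := by
    apply finsum_mem_eq_sum_of_subset
    · intro x hx
      rw [Set.Finite.coe_toFinset]
      refine ⟨hx.1, fun h0 => hx.2 ?_⟩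
      simpa [h0] using hx.2
    · intro x hx
      rw [Set.Finite.coe_toFinset] at hx
      exact hx.1
  rw [finsum_mem_eq_sum g h, h2]
  exact norm_sum_le _ _

theorem ZH.star_fmem {S : Set α} (g : α → ℂ) (h : (S ∩ Function.support g).Finite) :
    star (∑ᶠ x ∈ S, g x) = ∑ᶠ x ∈ S, star (g x) := by
  classical
  have h2 : ∑ᶠ x ∈ S, star (g x) = ∑ x ∈ h.toFinset, star (g x) := by
    apply finsum_mem_eq_sum_of_subset
    · intro x hx
      rw [Set.Finite.coe_toFinset]
      exact ⟨hx.1, fun h0 => hx.2 (by simp [h0])⟩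
    · intro x hx
      rw [Set.Finite.coe_toFinset] at hx
      exact hx.1
  rw [finsum_mem_eq_sum g h, h2, star_sum]

end FinsumHelpers

theorem ZH.zg_facts {Γ : Type*} (m : Γ → Γ → Γ → Prop) (E : Set Γ) (s : Γ → Γ)
    (hG : IsZGroupoid m E s) (eL eR : Γ → Γ)
    (hL : ∀ x, eL x ∈ E ∧ m x (eL x) x) (hR : ∀ x, eR x ∈ E ∧ m x x (eR x))
    (mul : Γ → Γ → Γ) (hmul : ∀ x y, eR x = eL y → m (mul x y) x y) :
    (∀ x, eL (s x) = eR x) ∧ (∀ x, eR (s x) = eL x) ∧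
    (∀ x y, eR x = eL y → eL (mul x y) = eL x) ∧
    (∀ x y, eR x = eL y → eR (mul x y) = eR y) ∧
    (∀ x y, eR x = eL y → s (mul x y) = mul (s y) (s x)) ∧
    (∀ x y w, eR x = eL y → eR y = eL w → mul (mul x y) w = mul x (mul y w)) ∧
    (∀ x, mul (s x) x = eR x) ∧ (∀ x, mul x (s x) = eL x) ∧
    (∀ x, mul (eL x) x = x) ∧ (∀ x, mul x (eR x) = x) := by
  obtain ⟨hss, hassoc, hidL, hidR, hinv, hpos, hposE⟩ := hG
  have L1 : ∀ {z x a}, a ∈ E → m z a x → z = x := fun ha h => (hidL _ _).1 ⟨_, ha, h⟩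
  have L2 : ∀ {z x a}, a ∈ E → m z x a → z = x := fun ha h => (hidR _ _).1 ⟨_, ha, h⟩
  have uL : ∀ {x a}, a ∈ E → m x a x → a = eL x := by
    intro x a ha h
    obtain ⟨u, hu1, hu2⟩ := (hassoc a (eL x) x x).2 ⟨x, (hL x).2, h⟩
    exact (L2 (hL x).1 hu1).symm.trans (L1 ha hu1)
  have uR : ∀ {x a}, a ∈ E → m x x a → a = eR x := by
    intro x a ha h
    obtain ⟨v, hv1, hv2⟩ := (hassoc x (eR x) a x).1 ⟨x, (hR x).2, h⟩
    exact (L1 (hR x).1 hv1).symm.trans (L2 ha hv1)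
  have sE : ∀ a ∈ E, s a = a := by
    intro a ha
    obtain ⟨z, hz⟩ := hpos (s a)
    have hzE := hposE (s a) z hz
    rw [hss a] at hz
    have h1 : z = s a := L1 ha hz
    rw [h1] at hz hzE
    exact (hidR (s a) a).1 ⟨s a, hzE, hz⟩
  have posU : ∀ {x z}, m z (s x) x → z = eR x := by
    intro x z hz
    obtain ⟨u, hu1, hu2⟩ := (hassoc (s x) x (eR x) z).2 ⟨x, (hR x).2, hz⟩
    exact L1 (hposE x u hu1) hu2
  have pos_ex : ∀ x, m (eR x) (s x) x := by
    intro x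
    obtain ⟨z, hz⟩ := hpos x
    have e := posU hz
    rw [e] at hz
    exact hz
  have eL_s : ∀ x, eL (s x) = eR x := by
    intro x
    have h : m (s x) (eR x) (s x) :=
      (hinv x (eR x) (s x)).2 (by rw [hss, sE _ (hR x).1]; exact (hR x).2)
    exact (uL (hR x).1 h).symm
  have eR_s : ∀ x, eR (s x) = eL x := by
    intro x
    have h : m (s x) (s x) (eL x) :=
      (hinv x (s x) (eL x)).2 (by rw [sE _ (hL x).1, hss]; exact (hL x).2)
    exact (uR (hL x).1 h).symm
  have M1 : ∀ {z x y}, m z x y → eR x = eL y := by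
    intro z x y h
    obtain ⟨u, hu1, hu2⟩ := (hassoc x (eL y) y z).2 ⟨y, (hL y).2, h⟩
    have hux : u = x := L2 (hL y).1 hu1
    rw [hux] at hu1
    exact (uR (hL y).1 hu1).symm
  have M2a : ∀ {z x y}, m z x y → eL z = eL x := by
    intro z x y h
    obtain ⟨v, hv1, hv2⟩ := (hassoc (eL x) x y z).1 ⟨x, (hL x).2, h⟩
    have hzv : z = v := L1 (hL x).1 hv2
    rw [← hzv] at hv2
    exact (uL (hL x).1 hv2).symm
  have M2b : ∀ {z x y}, m z x y → eR z = eR y := by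
    intro z x y h
    obtain ⟨u, hu1, hu2⟩ := (hassoc x y (eR y) z).2 ⟨y, (hR y).2, h⟩
    have hzu : z = u := L2 (hR y).1 hu2
    rw [← hzu] at hu2
    exact (uR (hR y).1 hu2).symm
  have M3 : ∀ {z z' x y}, m z x y → m z' x y → z = z' := by
    intro z z' x y h h'
    obtain ⟨v, hv, hyv⟩ := (hassoc (s x) x y y).1
      ⟨eR x, pos_ex x, by rw [M1 h]; exact (hL y).2⟩
    have key : ∀ t, m t x y → t = v := by
      intro t ht
      obtain ⟨u, hu1, hu2⟩ := (hassoc x (s x) v t).2 ⟨y, hyv, ht⟩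
      have hu1' : m u (s (s x)) (s x) := by rwa [hss]
      rw [posU hu1'] at hu2
      exact L1 (hR (s x)).1 hu2
    exact (key z h).trans (key z' h').symm
  have muleq : ∀ {z x y}, m z x y → z = mul x y := fun h => M3 h (hmul _ _ (M1 h))
  have mul_sl : ∀ x, mul (s x) x = eR x := fun x => (muleq (pos_ex x)).symm
  have mul_sr : ∀ x, mul x (s x) = eL x := by
    intro x
    have h := pos_ex (s x)
    rw [hss x, eR_s x] at h
    exact (muleq h).symm
  have mul_ul : ∀ x, mul (eL x) x = x := fun x => (muleq (hL x).2).symm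
  have mul_ur : ∀ x, mul x (eR x) = x := fun x => (muleq (hR x).2).symm
  have mul_eL : ∀ x y, eR x = eL y → eL (mul x y) = eL x := fun x y h => M2a (hmul x y h)
  have mul_eR : ∀ x y, eR x = eL y → eR (mul x y) = eR y := fun x y h => M2b (hmul x y h)
  have s_mul : ∀ x y, eR x = eL y → s (mul x y) = mul (s y) (s x) := by
    intro x y h
    have hm : m (s (mul x y)) (s y) (s x) :=
      (hinv (mul x y) (s y) (s x)).2 (by rw [hss, hss]; exact hmul x y h)
    exact muleq hm
  have massoc : ∀ x y w, eR x = eL y → eR y = eL w → mul (mul x y) w = mul x (mul y w) := by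
    intro x y w h1 h2
    have h3 : eR (mul x y) = eL w := by rw [mul_eR x y h1]; exact h2
    obtain ⟨v, hv1, hv2⟩ := (hassoc x y w (mul (mul x y) w)).1
      ⟨mul x y, hmul x y h1, hmul (mul x y) w h3⟩
    rw [muleq hv1] at hv2
    exact muleq hv2
  exact ⟨eL_s, eR_s, mul_eL, mul_eR, s_mul, massoc, mul_sl, mul_sr, mul_ul, mul_ur⟩


/-- `(A(Γ), ·, *, ‖·‖)` is a normed *-algebra. -/
theorem stmt15 {Γ : Type*} (m : Γ → Γ → Γ → Prop) (E : Set Γ) (s : Γ → Γ)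
    (hG : IsZGroupoid m E s)
    (eL eR : Γ → Γ)
    (hL : ∀ x, eL x ∈ E ∧ m x (eL x) x) (hR : ∀ x, eR x ∈ E ∧ m x x (eR x))
    (mul : Γ → Γ → Γ) (hmul : ∀ x y, eR x = eL y → m (mul x y) x y)
    (f f₁ f₂ f₃ : Γ → ℂ)
    (hf : {x | f x ≠ 0}.Finite) (hf₁ : {x | f₁ x ≠ 0}.Finite)
    (hf₂ : {x | f₂ x ≠ 0}.Finite) (hf₃ : {x | f₃ x ≠ 0}.Finite) :
    (∀ x, {y | eL y = eL x ∧ f₁ y * f₂ (mul (s y) x) ≠ 0}.Finite) ∧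
    {x | zconv eL s mul f₁ f₂ x ≠ 0}.Finite ∧
    zconv eL s mul (zconv eL s mul f₁ f₂) f₃ = zconv eL s mul f₁ (zconv eL s mul f₂ f₃) ∧
    zstar s (zconv eL s mul f₁ f₂) = zconv eL s mul (zstar s f₂) (zstar s f₁) ∧
    BddAbove (zfibNorm eL f '' E) ∧ BddAbove (zfibNorm eR f '' E) ∧
    (znorm E eL eR f = 0 → f = 0) ∧
    znorm E eL eR (f₁ + f₂) ≤ znorm E eL eR f₁ + znorm E eL eR f₂ ∧
    znorm E eL eR (zconv eL s mul f₁ f₂) ≤ znorm E eL eR f₁ * znorm E eL eR f₂ ∧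
    znorm E eL eR (zstar s f) = znorm E eL eR f := by
  classical
  obtain ⟨eL_s, eR_s, mul_eL, mul_eR, s_mul, massoc, mul_sl, mul_sr, mul_ul, mul_ur⟩ :=
    ZH.zg_facts m E s hG eL eR hL hR mul hmul
  have hss : ∀ x, s (s x) = x := hG.1
  have eLE : ∀ x, eL x ∈ E := fun x => (hL x).1
  have eRE : ∀ x, eR x ∈ E := fun x => (hR x).1
  -- cancellation laws
  have cancel1 : ∀ y x, eL y = eL x → mul y (mul (s y) x) = x := by
    intro y x h
    rw [← massoc y (s y) x (eL_s y).symm ((eR_s y).trans h), mul_sr, h, mul_ul]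
  have cancel1' : ∀ y x, eR y = eL x → mul (s y) (mul y x) = x := by
    intro y x h
    have h2 := cancel1 (s y) x ((eL_s y).trans h)
    rwa [hss] at h2
  have cancel2 : ∀ x z, eR x = eR z → mul (mul x (s z)) z = x := by
    intro x z h
    rw [massoc x (s z) z (h.trans (eL_s z).symm) (eR_s z), mul_sl, ← h, mul_ur]
  have cancel2' : ∀ w z, eR w = eL z → mul (mul w z) (s z) = w := by
    intro w z h
    rw [massoc w z (s z) h (eL_s z).symm, mul_sr, ← h, mul_ur]
  have himg : (Set.image2 mul {x | f₁ x ≠ 0} {x | f₂ x ≠ 0}).Finite := hf₁.image2 mul hf₂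
  -- Part 1
  have part1 : ∀ x, {y | eL y = eL x ∧ f₁ y * f₂ (mul (s y) x) ≠ 0}.Finite := by
    intro x
    apply hf₁.subset
    rintro y ⟨-, hy⟩
    exact left_ne_zero_of_mul hy
  -- Part 2
  have hconv_supp : {x | zconv eL s mul f₁ f₂ x ≠ 0} ⊆
      Set.image2 mul {x | f₁ x ≠ 0} {x | f₂ x ≠ 0} := by
    intro x hx
    simp only [Set.mem_setOf_eq, zconv] at hx
    obtain ⟨y, hy, hne⟩ := ZH.fmem_ne_zero hx
    exact ⟨y, left_ne_zero_of_mul hne, mul (s y) x, right_ne_zero_of_mul hne, cancel1 y x hy⟩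
  have part2 : {x | zconv eL s mul f₁ f₂ x ≠ 0}.Finite := himg.subset hconv_supp
  -- Part 3: associativity
  have part3 : zconv eL s mul (zconv eL s mul f₁ f₂) f₃ = zconv eL s mul f₁ (zconv eL s mul f₂ f₃) := by
    funext x
    simp only [zconv]
    set S : Set Γ := {y | eL y = eL x} with hS
    have stepA : (∑ᶠ y ∈ S, (∑ᶠ t ∈ {t | eL t = eL y}, f₁ t * f₂ (mul (s t) y)) * f₃ (mul (s y) x))
        = ∑ᶠ y ∈ S, ∑ᶠ t ∈ S, f₁ t * f₂ (mul (s t) y) * f₃ (mul (s y) x) := by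
      apply finsum_mem_congr rfl
      intro y hy
      have hy' : eL y = eL x := hy
      have hsets : {t | eL t = eL y} = S := by
        ext t; simp only [Set.mem_setOf_eq, hS, hy']
      rw [hsets]
      exact ZH.fmem_mul_r _ _ (hf₁.subset (fun t ht => left_ne_zero_of_mul ht.2))
    have stepB : (∑ᶠ y ∈ S, ∑ᶠ t ∈ S, f₁ t * f₂ (mul (s t) y) * f₃ (mul (s y) x))
        = ∑ᶠ t ∈ S, ∑ᶠ y ∈ S, f₁ t * f₂ (mul (s t) y) * f₃ (mul (s y) x) := by
      apply ZH.fmem_swap (F := fun y t => f₁ t * f₂ (mul (s t) y) * f₃ (mul (s y) x))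
      apply (himg.prod hf₁).subset
      rintro ⟨y, t⟩ ⟨hy, ht, hne⟩
      have hy' : eL y = eL x := hy
      have ht' : eL t = eL x := ht
      have h1 : f₁ t ≠ 0 := left_ne_zero_of_mul (left_ne_zero_of_mul hne)
      have h2 : f₂ (mul (s t) y) ≠ 0 := right_ne_zero_of_mul (left_ne_zero_of_mul hne)
      exact ⟨⟨t, h1, mul (s t) y, h2, cancel1 t y (ht'.trans hy'.symm)⟩, h1⟩
    have stepC : ∀ t ∈ S, (∑ᶠ y ∈ S, f₁ t * f₂ (mul (s t) y) * f₃ (mul (s y) x))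
        = f₁ t * ∑ᶠ y' ∈ {y' | eL y' = eL (mul (s t) x)}, f₂ y' * f₃ (mul (s y') (mul (s t) x)) := by
      intro t ht
      have ht' : eL t = eL x := ht
      have hst : eR (s t) = eL x := (eR_s t).trans ht'
      have htar : eL (mul (s t) x) = eR t := (mul_eL (s t) x hst).trans (eL_s t)
      rw [ZH.fmem_mul_l _ (f₁ t) (hf₂.subset (fun y' hy' => left_ne_zero_of_mul hy'.2))]
      apply finsum_mem_eq_of_bijOn (fun y => mul (s t) y)
      · refine Set.InvOn.bijOn (f' := fun y' => mul t y') ⟨fun y hy => ?_, fun y' hy' => ?_⟩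
          (fun y hy => ?_) (fun y' hy' => ?_)
        · exact cancel1 t y (ht'.trans (show eL y = eL x from hy).symm)
        · exact cancel1' t y' ((show eL y' = eL (mul (s t) x) from hy').trans htar).symm
        · show eL (mul (s t) y) = eL (mul (s t) x)
          rw [mul_eL (s t) y ((eR_s t).trans (ht'.trans (show eL y = eL x from hy).symm)),
              mul_eL (s t) x hst]
        · show eL (mul t y') = eL x
          rw [mul_eL t y' ((show eL y' = eL (mul (s t) x) from hy').trans htar).symm]
          exact ht'
      · intro y hy
        have hy' : eL y = eL x := hy
        have key : mul (s (mul (s t) y)) (mul (s t) x) = mul (s y) x := by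
          rw [s_mul (s t) y ((eR_s t).trans (ht'.trans hy'.symm)), hss,
              massoc (s y) t (mul (s t) x) ((eR_s y).trans (hy'.trans ht'.symm)) htar.symm,
              cancel1 t x ht']
        rw [key]; ring
    rw [stepA, stepB]
    exact finsum_mem_congr rfl stepC
  -- Part 4: star
  have part4 : zstar s (zconv eL s mul f₁ f₂) = zconv eL s mul (zstar s f₂) (zstar s f₁) := by
    funext x
    simp only [zstar, zconv]
    rw [ZH.star_fmem _ (hf₁.subset (fun y hy => left_ne_zero_of_mul hy.2))]
    refine (finsum_mem_eq_of_bijOn (fun y' => s (mul (s y') x)) ?_ ?_).symm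
    · have comp1 : ∀ y', eL y' = eL x → mul (mul (s y') x) (s x) = s y' := by
        intro y' hy'
        rw [massoc (s y') x (s x) ((eR_s y').trans hy') (eL_s x).symm, mul_sr,
            show eL x = eR (s y') from ((eR_s y').trans hy').symm, mul_ur]
      refine Set.InvOn.bijOn (f' := fun y => s (mul (s y) (s x))) ⟨fun y' hy' => ?_, fun y hy => ?_⟩
        (fun y' hy' => ?_) (fun y hy => ?_)
      · -- s (mul (s (s (mul (s y') x))) (s x)) = y'
        show s (mul (s (s (mul (s y') x))) (s x)) = y'
        rw [hss, comp1 y' (show eL y' = eL x from hy'), hss]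
      · -- s (mul (s (s (mul (s y) (s x)))) x) = y
        show s (mul (s (s (mul (s y) (s x)))) x) = y
        have hy' : eL y = eL (s x) := hy
        rw [hss, massoc (s y) (s x) x ((eR_s y).trans hy') (eR_s x), mul_sl,
            show eR x = eR (s y) from ((eR_s y).trans (hy'.trans (eL_s x))).symm, mul_ur, hss]
      · show eL (s (mul (s y') x)) = eL (s x)
        rw [eL_s, mul_eR (s y') x ((eR_s y').trans (show eL y' = eL x from hy')), eL_s]
      · show eL (s (mul (s y) (s x))) = eL x
        have hy' : eL y = eL (s x) := hy
        rw [eL_s, mul_eR (s y) (s x) ((eR_s y).trans hy'), eR_s]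
    · intro y' hy'
      have hy2 : eL y' = eL x := hy'
      have comp1 : mul (mul (s y') x) (s x) = s y' := by
        rw [massoc (s y') x (s x) ((eR_s y').trans hy2) (eL_s x).symm, mul_sr,
            show eL x = eR (s y') from ((eR_s y').trans hy2).symm, mul_ur]
      show star (f₂ (s y')) * star (f₁ (s (mul (s y') x)))
          = star (f₁ (s (mul (s y') x)) * f₂ (mul (s (s (mul (s y') x))) (s x)))
      rw [hss, comp1, star_mul]
  -- norm infrastructure
  have fib_le : ∀ (e : Γ → Γ) (g : Γ → ℂ) (hg : {x | g x ≠ 0}.Finite) (a : Γ),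
      zfibNorm e g a ≤ ∑ x ∈ hg.toFinset, ‖g x‖ := by
    intro e g hg a
    show (∑ᶠ x ∈ {x | e x = a}, ‖g x‖) ≤ _
    rw [finsum_mem_eq_sum_of_subset _ (t := hg.toFinset.filter (fun x => e x = a)) ?_ ?_]
    · exact Finset.sum_le_sum_of_subset_of_nonneg (Finset.filter_subset _ _)
        (fun i _ _ => norm_nonneg _)
    · intro x hx
      refine Finset.mem_coe.2 (Finset.mem_filter.2 ⟨hg.mem_toFinset.2 ?_, hx.1⟩)
      intro h0
      exact hx.2 (by simp [Function.mem_support, h0])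
    · intro x hx
      exact (Finset.mem_filter.1 hx).2
  have zbdd : ∀ (e : Γ → Γ) (g : Γ → ℂ), {x | g x ≠ 0}.Finite → BddAbove (zfibNorm e g '' E) := by
    intro e g hg
    refine ⟨∑ x ∈ hg.toFinset, ‖g x‖, ?_⟩
    rintro r ⟨a, -, rfl⟩
    exact fib_le e g hg a
  have fib_nonneg : ∀ (e : Γ → Γ) (g : Γ → ℂ) (a : Γ), 0 ≤ zfibNorm e g a := by
    intro e g a
    exact ZH.fmem_nonneg (fun x => norm_nonneg _)
  have znorm_nonneg : ∀ g : Γ → ℂ, 0 ≤ znorm E eL eR g := by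
    intro g
    refine le_trans (Real.sSup_nonneg ?_) (le_max_left _ _)
    rintro r ⟨a, -, rfl⟩
    exact fib_nonneg eL g a
  have fib_le_znormL : ∀ (g : Γ → ℂ), {x | g x ≠ 0}.Finite →
      ∀ a ∈ E, zfibNorm eL g a ≤ znorm E eL eR g := fun g hg a ha =>
    le_trans (le_csSup (zbdd eL g hg) ⟨a, ha, rfl⟩) (le_max_left _ _)
  have fib_le_znormR : ∀ (g : Γ → ℂ), {x | g x ≠ 0}.Finite →
      ∀ a ∈ E, zfibNorm eR g a ≤ znorm E eL eR g := fun g hg a ha =>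
    le_trans (le_csSup (zbdd eR g hg) ⟨a, ha, rfl⟩) (le_max_right _ _)
  -- Part 7: norm zero implies zero
  have part7 : znorm E eL eR f = 0 → f = 0 := by
    intro h0
    funext x
    have h1 : ‖f x‖ ≤ 0 := by
      calc ‖f x‖ ≤ zfibNorm eL f (eL x) := by
            refine ZH.single_le_fmem ?_ (fun y => norm_nonneg _) rfl
            apply hf.subset
            rintro y ⟨-, hy⟩
            rw [Function.mem_support] at hy
            intro hc
            exact hy (by simp [hc])
        _ ≤ znorm E eL eR f := fib_le_znormL f hf (eL x) (eLE x)
        _ = 0 := h0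
    have h2 : ‖f x‖ = 0 := le_antisymm h1 (norm_nonneg _)
    simpa using h2
  -- Part 8: triangle inequality
  have fib_add : ∀ (e : Γ → Γ) (a : Γ),
      zfibNorm e (f₁ + f₂) a ≤ zfibNorm e f₁ a + zfibNorm e f₂ a := by
    intro e a
    have hu := hf₁.union hf₂
    set t : Finset Γ := hu.toFinset.filter (fun x => e x = a) with htdef
    have hts : ↑t ⊆ {x | e x = a} := fun x hx => (Finset.mem_filter.1 hx).2
    have key : ∀ g : Γ → ℂ, (∀ x, g x ≠ 0 → f₁ x ≠ 0 ∨ f₂ x ≠ 0) →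
        zfibNorm e g a = ∑ x ∈ t, ‖g x‖ := by
      intro g hgsub
      apply finsum_mem_eq_sum_of_subset
      · intro x hx
        refine Finset.mem_coe.2 (Finset.mem_filter.2 ⟨hu.mem_toFinset.2 (hgsub x ?_), hx.1⟩)
        intro hc
        exact hx.2 (by simp [Function.mem_support, hc])
      · exact hts
    have k0 := key (f₁ + f₂) (fun x hx => by
      by_contra hc
      push_neg at hc
      exact hx (by simp [Pi.add_apply, hc.1, hc.2]))
    rw [k0, key f₁ (fun x hx => Or.inl hx), key f₂ (fun x hx => Or.inr hx),
        ← Finset.sum_add_distrib]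
    exact Finset.sum_le_sum fun x _ => by simpa using norm_add_le (f₁ x) (f₂ x)
  have part8 : znorm E eL eR (f₁ + f₂) ≤ znorm E eL eR f₁ + znorm E eL eR f₂ := by
    have hnn : 0 ≤ znorm E eL eR f₁ + znorm E eL eR f₂ :=
      add_nonneg (znorm_nonneg f₁) (znorm_nonneg f₂)
    apply max_le
    · apply Real.sSup_le ?_ hnn
      rintro r ⟨a, ha, rfl⟩
      exact le_trans (fib_add eL a)
        (add_le_add (fib_le_znormL f₁ hf₁ a ha) (fib_le_znormL f₂ hf₂ a ha))
    · apply Real.sSup_le ?_ hnn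
      rintro r ⟨a, ha, rfl⟩
      exact le_trans (fib_add eR a)
        (add_le_add (fib_le_znormR f₁ hf₁ a ha) (fib_le_znormR f₂ hf₂ a ha))
  -- Part 10: norm of star
  have part10 : znorm E eL eR (zstar s f) = znorm E eL eR f := by
    have swap1 : zfibNorm eL (zstar s f) = zfibNorm eR f := by
      funext a
      show (∑ᶠ x ∈ {x | eL x = a}, ‖zstar s f x‖)
          = ∑ᶠ z ∈ {z | eR z = a}, ‖f z‖
      apply finsum_mem_eq_of_bijOn s
      · refine Set.InvOn.bijOn ⟨fun x _ => hss x, fun z _ => hss z⟩ (fun x hx => ?_) (fun z hz => ?_)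
        · show eR (s x) = a; rw [eR_s]; exact hx
        · show eL (s z) = a; rw [eL_s]; exact hz
      · intro x hx
        simp [zstar, norm_star]
    have swap2 : zfibNorm eR (zstar s f) = zfibNorm eL f := by
      funext a
      show (∑ᶠ x ∈ {x | eR x = a}, ‖zstar s f x‖)
          = ∑ᶠ z ∈ {z | eL z = a}, ‖f z‖
      apply finsum_mem_eq_of_bijOn s
      · refine Set.InvOn.bijOn ⟨fun x _ => hss x, fun z _ => hss z⟩ (fun x hx => ?_) (fun z hz => ?_)
        · show eL (s x) = a; rw [eL_s]; exact hx
        · show eR (s z) = a; rw [eR_s]; exact hz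
      · intro x hx
        simp [zstar, norm_star]
    show max (sSup (zfibNorm eL (zstar s f) '' E)) (sSup (zfibNorm eR (zstar s f) '' E)) = _
    rw [swap1, swap2]
    exact max_comm _ _
  -- Part 9: submultiplicativity
  have part9 : znorm E eL eR (zconv eL s mul f₁ f₂) ≤ znorm E eL eR f₁ * znorm E eL eR f₂ := by
    have hnn : 0 ≤ znorm E eL eR f₁ * znorm E eL eR f₂ :=
      mul_nonneg (znorm_nonneg f₁) (znorm_nonneg f₂)
    apply max_le
    · -- left fiber estimate
      apply Real.sSup_le ?_ hnn
      rintro r ⟨a, ha, rfl⟩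
      set S : Set Γ := {x | eL x = a} with hSdef
      have hsupc : (S ∩ Function.support fun x => ‖zconv eL s mul f₁ f₂ x‖).Finite := by
        apply part2.subset
        rintro x ⟨-, hx⟩
        rw [Function.mem_support] at hx
        exact fun hc => hx (by simp [hc])
      have hsupG : (S ∩ Function.support fun x =>
          ∑ᶠ y ∈ S, ‖f₁ y‖ * ‖f₂ (mul (s y) x)‖).Finite := by
        apply himg.subset
        rintro x ⟨hxS, hx⟩
        rw [Function.mem_support] at hx
        obtain ⟨y, hyS, hy⟩ := ZH.fmem_ne_zero hx
        have h1 : f₁ y ≠ 0 := fun hc => hy (by simp [hc])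
        have h2 : f₂ (mul (s y) x) ≠ 0 := fun hc => hy (by simp [hc])
        exact ⟨y, h1, mul (s y) x, h2,
          cancel1 y x ((show eL y = a from hyS).trans (show eL x = a from hxS).symm)⟩
      have step1 : zfibNorm eL (zconv eL s mul f₁ f₂) a ≤
          ∑ᶠ x ∈ S, ∑ᶠ y ∈ S, ‖f₁ y‖ * ‖f₂ (mul (s y) x)‖ := by
        refine ZH.fmem_le hsupc hsupG ?_
        intro x hx
        have hx' : eL x = a := hx
        calc ‖zconv eL s mul f₁ f₂ x‖
            ≤ ∑ᶠ y ∈ {y | eL y = eL x}, ‖f₁ y * f₂ (mul (s y) x)‖ :=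
              ZH.abs_fmem_le _ (hf₁.subset (fun y hy => left_ne_zero_of_mul hy.2))
          _ = ∑ᶠ y ∈ S, ‖f₁ y‖ * ‖f₂ (mul (s y) x)‖ := by
              refine finsum_mem_congr ?_ (fun y _ => norm_mul _ _)
              ext y
              simp only [hSdef, Set.mem_setOf_eq, hx']
      have step2 : (∑ᶠ x ∈ S, ∑ᶠ y ∈ S, ‖f₁ y‖ * ‖f₂ (mul (s y) x)‖)
          = ∑ᶠ y ∈ S, ∑ᶠ x ∈ S, ‖f₁ y‖ * ‖f₂ (mul (s y) x)‖ := by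
        apply ZH.fmem_swap (F := fun x y => ‖f₁ y‖ * ‖f₂ (mul (s y) x)‖)
        apply (himg.prod hf₁).subset
        rintro ⟨x, y⟩ ⟨hx, hy, hne⟩
        have h1 : f₁ y ≠ 0 := fun hc => hne (by simp [hc])
        have h2 : f₂ (mul (s y) x) ≠ 0 := fun hc => hne (by simp [hc])
        exact ⟨⟨y, h1, mul (s y) x, h2,
          cancel1 y x ((show eL y = a from hy).trans (show eL x = a from hx).symm)⟩, h1⟩
      have step3 : ∀ y ∈ S, (∑ᶠ x ∈ S, ‖f₁ y‖ * ‖f₂ (mul (s y) x)‖)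
          ≤ ‖f₁ y‖ * znorm E eL eR f₂ := by
        intro y hy
        have hy' : eL y = a := hy
        have hfin3 : (S ∩ Function.support fun x => ‖f₂ (mul (s y) x)‖).Finite := by
          apply (hf₂.image (mul y)).subset
          rintro x ⟨hxS, hx⟩
          rw [Function.mem_support] at hx
          have h2 : f₂ (mul (s y) x) ≠ 0 := fun hc => hx (by simp [hc])
          exact ⟨mul (s y) x, h2, cancel1 y x (hy'.trans (show eL x = a from hxS).symm)⟩
        rw [← ZH.fmem_mul_l _ (‖f₁ y‖) hfin3]
        refine mul_le_mul_of_nonneg_left ?_ (norm_nonneg _)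
        have reix : (∑ᶠ x ∈ S, ‖f₂ (mul (s y) x)‖)
            = ∑ᶠ z ∈ {z | eL z = eR y}, ‖f₂ z‖ := by
          apply finsum_mem_eq_of_bijOn (fun x => mul (s y) x)
          · refine Set.InvOn.bijOn (f' := fun z => mul y z) ⟨fun x hx => ?_, fun z hz => ?_⟩
              (fun x hx => ?_) (fun z hz => ?_)
            · exact cancel1 y x (hy'.trans (show eL x = a from hx).symm)
            · exact cancel1' y z (show eL z = eR y from hz).symm
            · show eL (mul (s y) x) = eR y
              rw [mul_eL (s y) x ((eR_s y).trans (hy'.trans (show eL x = a from hx).symm)), eL_s]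
            · show eL (mul y z) = a
              rw [mul_eL y z (show eL z = eR y from hz).symm]
              exact hy'
          · intro x hx; rfl
        rw [reix]
        exact fib_le_znormL f₂ hf₂ (eR y) (eRE y)
      have step4 : (∑ᶠ y ∈ S, ∑ᶠ x ∈ S, ‖f₁ y‖ * ‖f₂ (mul (s y) x)‖)
          ≤ ∑ᶠ y ∈ S, ‖f₁ y‖ * znorm E eL eR f₂ := by
        refine ZH.fmem_le ?_ ?_ step3
        · apply hf₁.subset
          rintro y ⟨-, hy⟩
          rw [Function.mem_support] at hy
          intro hc
          refine hy (finsum_mem_eq_zero_of_forall_eq_zero fun x _ => by simp [hc])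
        · apply hf₁.subset
          rintro y ⟨-, hy⟩
          rw [Function.mem_support] at hy
          exact fun hc => hy (by simp [hc])
      have step5 : (∑ᶠ y ∈ S, ‖f₁ y‖ * znorm E eL eR f₂)
          = (∑ᶠ y ∈ S, ‖f₁ y‖) * znorm E eL eR f₂ := by
        refine (ZH.fmem_mul_r _ _ ?_).symm
        apply hf₁.subset
        rintro y ⟨-, hy⟩
        rw [Function.mem_support] at hy
        exact fun hc => hy (by simp [hc])
      calc zfibNorm eL (zconv eL s mul f₁ f₂) a
          ≤ _ := step1
        _ = _ := step2
        _ ≤ _ := step4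
        _ = _ := step5
        _ ≤ znorm E eL eR f₁ * znorm E eL eR f₂ :=
            mul_le_mul_of_nonneg_right (fib_le_znormL f₁ hf₁ a ha) (znorm_nonneg f₂)
    · -- right fiber estimate
      apply Real.sSup_le ?_ hnn
      rintro r ⟨a, ha, rfl⟩
      set S : Set Γ := {x | eR x = a} with hSdef
      have hsupc : (S ∩ Function.support fun x => ‖zconv eL s mul f₁ f₂ x‖).Finite := by
        apply part2.subset
        rintro x ⟨-, hx⟩
        rw [Function.mem_support] at hx
        exact fun hc => hx (by simp [hc])
      have inner_eq : ∀ x ∈ S, (∑ᶠ y ∈ {y | eL y = eL x}, ‖f₁ y * f₂ (mul (s y) x)‖)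
          = ∑ᶠ z ∈ S, ‖f₁ (mul x (s z))‖ * ‖f₂ z‖ := by
        intro x hx
        have hx' : eR x = a := hx
        apply finsum_mem_eq_of_bijOn (fun y => mul (s y) x)
        · refine Set.InvOn.bijOn (f' := fun z => mul x (s z)) ⟨fun y hy => ?_, fun z hz => ?_⟩
            (fun y hy => ?_) (fun z hz => ?_)
          · show mul x (s (mul (s y) x)) = y
            have hy' : eL y = eL x := hy
            rw [s_mul (s y) x ((eR_s y).trans hy'), hss]
            exact cancel1 x y hy'.symm
          · show mul (s (mul x (s z))) x = z
            have hz' : eR z = a := hz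
            rw [s_mul x (s z) (hx'.trans ((eL_s z).trans hz').symm), hss]
            exact cancel2 z x (hz'.trans hx'.symm)
          · show eR (mul (s y) x) = a
            rw [mul_eR (s y) x ((eR_s y).trans (show eL y = eL x from hy))]
            exact hx'
          · show eL (mul x (s z)) = eL x
            exact mul_eL x (s z) (hx'.trans ((eL_s z).trans (show eR z = a from hz)).symm)
        · intro y hy
          have hy' : eL y = eL x := hy
          have hrec : mul x (s (mul (s y) x)) = y := by
            rw [s_mul (s y) x ((eR_s y).trans hy'), hss]
            exact cancel1 x y hy'.symm
          rw [hrec, norm_mul]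
      have hsupG : (S ∩ Function.support fun x =>
          ∑ᶠ z ∈ S, ‖f₁ (mul x (s z))‖ * ‖f₂ z‖).Finite := by
        apply himg.subset
        rintro x ⟨hxS, hx⟩
        rw [Function.mem_support] at hx
        obtain ⟨z, hzS, hz⟩ := ZH.fmem_ne_zero hx
        have h1 : f₁ (mul x (s z)) ≠ 0 := fun hc => hz (by simp [hc])
        have h2 : f₂ z ≠ 0 := fun hc => hz (by simp [hc])
        exact ⟨mul x (s z), h1, z, h2,
          cancel2 x z ((show eR x = a from hxS).trans (show eR z = a from hzS).symm)⟩
      have step1 : zfibNorm eR (zconv eL s mul f₁ f₂) a ≤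
          ∑ᶠ x ∈ S, ∑ᶠ z ∈ S, ‖f₁ (mul x (s z))‖ * ‖f₂ z‖ := by
        refine ZH.fmem_le hsupc hsupG ?_
        intro x hx
        exact (ZH.abs_fmem_le _ (hf₁.subset (fun y hy => left_ne_zero_of_mul hy.2))).trans_eq
          (inner_eq x hx)
      have step2 : (∑ᶠ x ∈ S, ∑ᶠ z ∈ S, ‖f₁ (mul x (s z))‖ * ‖f₂ z‖)
          = ∑ᶠ z ∈ S, ∑ᶠ x ∈ S, ‖f₁ (mul x (s z))‖ * ‖f₂ z‖ := by
        apply ZH.fmem_swap (F := fun x z => ‖f₁ (mul x (s z))‖ * ‖f₂ z‖)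
        apply (himg.prod hf₂).subset
        rintro ⟨x, z⟩ ⟨hx, hz, hne⟩
        have h1 : f₁ (mul x (s z)) ≠ 0 := fun hc => hne (by simp [hc])
        have h2 : f₂ z ≠ 0 := fun hc => hne (by simp [hc])
        exact ⟨⟨mul x (s z), h1, z, h2,
          cancel2 x z ((show eR x = a from hx).trans (show eR z = a from hz).symm)⟩, h2⟩
      have step3 : ∀ z ∈ S, (∑ᶠ x ∈ S, ‖f₁ (mul x (s z))‖ * ‖f₂ z‖)
          ≤ znorm E eL eR f₁ * ‖f₂ z‖ := by
        intro z hz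
        have hz' : eR z = a := hz
        have hfin3 : (S ∩ Function.support fun x => ‖f₁ (mul x (s z))‖).Finite := by
          apply (hf₁.image (fun w => mul w z)).subset
          rintro x ⟨hxS, hx⟩
          rw [Function.mem_support] at hx
          have h1 : f₁ (mul x (s z)) ≠ 0 := fun hc => hx (by simp [hc])
          exact ⟨mul x (s z), h1, cancel2 x z ((show eR x = a from hxS).trans hz'.symm)⟩
        rw [← ZH.fmem_mul_r _ (‖f₂ z‖) hfin3]
        refine mul_le_mul_of_nonneg_right ?_ (norm_nonneg _)
        have reix : (∑ᶠ x ∈ S, ‖f₁ (mul x (s z))‖)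
            = ∑ᶠ w ∈ {w | eR w = eL z}, ‖f₁ w‖ := by
          apply finsum_mem_eq_of_bijOn (fun x => mul x (s z))
          · refine Set.InvOn.bijOn (f' := fun w => mul w z) ⟨fun x hx => ?_, fun w hw => ?_⟩
              (fun x hx => ?_) (fun w hw => ?_)
            · exact cancel2 x z ((show eR x = a from hx).trans hz'.symm)
            · exact cancel2' w z (show eR w = eL z from hw)
            · show eR (mul x (s z)) = eL z
              rw [mul_eR x (s z) ((show eR x = a from hx).trans ((eL_s z).trans hz').symm), eR_s]
            · show eR (mul w z) = a
              rw [mul_eR w z (show eR w = eL z from hw)]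
              exact hz'
          · intro x hx; rfl
        rw [reix]
        exact fib_le_znormR f₁ hf₁ (eL z) (eLE z)
      have step4 : (∑ᶠ z ∈ S, ∑ᶠ x ∈ S, ‖f₁ (mul x (s z))‖ * ‖f₂ z‖)
          ≤ ∑ᶠ z ∈ S, znorm E eL eR f₁ * ‖f₂ z‖ := by
        refine ZH.fmem_le ?_ ?_ step3
        · apply hf₂.subset
          rintro z ⟨-, hz⟩
          rw [Function.mem_support] at hz
          intro hc
          refine hz (finsum_mem_eq_zero_of_forall_eq_zero fun x _ => by simp [hc])
        · apply hf₂.subset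
          rintro z ⟨-, hz⟩
          rw [Function.mem_support] at hz
          exact fun hc => hz (by simp [hc])
      have step5 : (∑ᶠ z ∈ S, znorm E eL eR f₁ * ‖f₂ z‖)
          = znorm E eL eR f₁ * ∑ᶠ z ∈ S, ‖f₂ z‖ := by
        refine (ZH.fmem_mul_l _ _ ?_).symm
        apply hf₂.subset
        rintro z ⟨-, hz⟩
        rw [Function.mem_support] at hz
        exact fun hc => hz (by simp [hc])
      calc zfibNorm eR (zconv eL s mul f₁ f₂) a
          ≤ _ := step1
        _ = _ := step2
        _ ≤ _ := step4
        _ = _ := step5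
        _ ≤ znorm E eL eR f₁ * znorm E eL eR f₂ :=
            mul_le_mul_of_nonneg_left (fib_le_znormR f₂ hf₂ a ha) (znorm_nonneg f₁)
  exact ⟨part1, part2, part3, part4, zbdd eL f hf, zbdd eR f hf, part7, part8, part9, part10⟩
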